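/- Let n, τ, U be as in the context, let γ : [0,s₀] → U be a geodesic curve with Δτ(γ(0)) = 0, and assume s₀ ≤ n₀. Then the amplitude defined by the exponential formula A = (1/2)·exp( −(1/2)·∫₀^{s₀} (Δτ/n²)(γ(s)) ds ) satisfies the lower bound A ≥ A₀ := (1/2)·exp( −3·n₀₀²·n₀²/2 ). (The estimate from below of the amplitude of the first term of the expansion of the solution of the forward problem, Theorem 3.1, part 2.) -/

import Mathlib

open Real Set

noncomputable def pd (i : Fin 3) (f : (Fin 3 → ℝ) → ℝ) (x : Fin 3 → ℝ) : ℝ :=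
  fderiv ℝ f x (Pi.single i 1)

noncomputable def lap (f : (Fin 3 → ℝ) → ℝ) (x : Fin 3 → ℝ) : ℝ :=
  ∑ i : Fin 3, pd i (pd i f) x

lemma clm_apply_eq_sum (L : (Fin 3 → ℝ) →L[ℝ] ℝ) (v : Fin 3 → ℝ) :
    L v = ∑ i : Fin 3, v i * L (Pi.single i 1) := by
  have hv : v = ∑ i : Fin 3, v i • (Pi.single i 1 : Fin 3 → ℝ) := by
    funext j
    simp [Pi.single_apply, Finset.sum_apply]
  conv_lhs => rw [hv]
  rw [map_sum]
  simp

lemma pd_contDiffAt {f : (Fin 3 → ℝ) → ℝ} {x : Fin 3 → ℝ} {m : ℕ}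
    (hf : ContDiffAt ℝ (m + 1) f x) (i : Fin 3) : ContDiffAt ℝ m (pd i f) x := by
  have h1 : ContDiffAt ℝ m (fderiv ℝ f) x := hf.fderiv_right (by norm_cast)
  exact ((ContinuousLinearMap.apply ℝ ℝ (Pi.single i 1)).contDiff.contDiffAt).comp x h1

lemma pd_sum {f : Fin 3 → (Fin 3 → ℝ) → ℝ} {x : Fin 3 → ℝ}
    (hf : ∀ j, DifferentiableAt ℝ (f j) x) (i : Fin 3) :
    pd i (fun y => ∑ j, f j y) x = ∑ j, pd i (f j) x := by
  unfold pd
  rw [fderiv_fun_sum (fun j _ => hf j)]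
  simp

lemma pd_mul {f g : (Fin 3 → ℝ) → ℝ} {x : Fin 3 → ℝ}
    (hf : DifferentiableAt ℝ f x) (hg : DifferentiableAt ℝ g x) (i : Fin 3) :
    pd i (fun y => f y * g y) x = pd i f x * g x + f x * pd i g x := by
  unfold pd
  rw [fderiv_fun_mul hf hg]
  simp
  ring

lemma pd_sq {g : (Fin 3 → ℝ) → ℝ} {x : Fin 3 → ℝ}
    (hg : DifferentiableAt ℝ g x) (i : Fin 3) :
    pd i (fun y => g y ^ 2) x = 2 * g x * pd i g x := by
  have h : (fun y => g y ^ 2) = fun y => g y * g y := by funext y; ring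
  rw [h, pd_mul hg hg]
  ring

lemma pd_comm {f : (Fin 3 → ℝ) → ℝ} {x : Fin 3 → ℝ} (hf : ContDiffAt ℝ 2 f x)
    (i j : Fin 3) : pd i (pd j f) x = pd j (pd i f) x := by
  have hsymm : IsSymmSndFDerivAt ℝ f x := hf.isSymmSndFDerivAt (by simp)
  have hdiff : DifferentiableAt ℝ (fderiv ℝ f) x :=
    (hf.fderiv_right (m := 1) (by norm_num)).differentiableAt (by norm_num)
  have key : ∀ u w : Fin 3 → ℝ,
      fderiv ℝ (fun y => fderiv ℝ f y u) x w = fderiv ℝ (fderiv ℝ f) x w u := by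
    intro u w
    rw [fderiv_clm_apply hdiff (differentiableAt_const u)]
    simp
  show fderiv ℝ (fun y => fderiv ℝ f y (Pi.single j 1)) x (Pi.single i 1)
      = fderiv ℝ (fun y => fderiv ℝ f y (Pi.single i 1)) x (Pi.single j 1)
  rw [key, key, hsymm.eq]

lemma pd_congr_nhds {f g : (Fin 3 → ℝ) → ℝ} {x : Fin 3 → ℝ}
    (h : f =ᶠ[nhds x] g) (i : Fin 3) : pd i f x = pd i g x := by
  unfold pd
  rw [h.fderiv_eq]

theorem stmt4
    (n₀ n₀₀ : ℝ) (hn₀ : 1 < n₀) (hn₀n₀₀ : n₀ < n₀₀)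
    (n : (Fin 3 → ℝ) → ℝ) (hn : ContDiff ℝ 2 n)
    (hn1 : ∀ x, 1 ≤ n x) (hn2 : ∀ x, n x ≤ n₀)
    (hb0 : ∀ x, |n x| ≤ n₀₀)
    (hb1 : ∀ x, ∀ i : Fin 3, |pd i n x| ≤ n₀₀)
    (hb2 : ∀ x, ∀ i j : Fin 3, |pd i (pd j n) x| ≤ n₀₀)
    (U : Set (Fin 3 → ℝ)) (hU : IsOpen U)
    (τ : (Fin 3 → ℝ) → ℝ) (hτ : ContDiffOn ℝ 3 τ U)
    (heik : ∀ x ∈ U, ∑ i : Fin 3, (pd i τ x) ^ 2 = (n x) ^ 2)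
    (s₀ : ℝ) (hs₀ : 0 ≤ s₀) (hs₀n₀ : s₀ ≤ n₀) (γ : ℝ → (Fin 3 → ℝ))
    (hγU : ∀ s ∈ Icc 0 s₀, γ s ∈ U)
    (hgeo : ∀ s ∈ Icc 0 s₀,
      HasDerivWithinAt γ (fun i => pd i τ (γ s) / (n (γ s)) ^ 2) (Icc 0 s₀) s)
    (hinit : lap τ (γ 0) = 0) :
    (1 / 2 : ℝ) * Real.exp (-(1 / 2) * ∫ s in (0:ℝ)..s₀, lap τ (γ s) / n (γ s) ^ 2)
      ≥ (1 / 2 : ℝ) * Real.exp (-(3 * n₀₀ ^ 2 * n₀ ^ 2) / 2) := by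
  -- basic smoothness facts at points of U
  have hτx : ∀ x ∈ U, ContDiffAt ℝ 3 τ x := fun x hx => hτ.contDiffAt (hU.mem_nhds hx)
  have hτ2 : ∀ x ∈ U, ∀ i : Fin 3, ContDiffAt ℝ 2 (pd i τ) x := by
    intro x hx i
    exact pd_contDiffAt (m := 2) (by exact_mod_cast hτx x hx) i
  have hτ1 : ∀ x ∈ U, ∀ i j : Fin 3, ContDiffAt ℝ 1 (pd i (pd j τ)) x := by
    intro x hx i j
    exact pd_contDiffAt (m := 1) (by exact_mod_cast hτ2 x hx j) i
  have dτ1 : ∀ x ∈ U, ∀ i : Fin 3, DifferentiableAt ℝ (pd i τ) x := fun x hx i =>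
    (hτ2 x hx i).differentiableAt (by norm_num)
  have dτ2 : ∀ x ∈ U, ∀ i j : Fin 3, DifferentiableAt ℝ (pd i (pd j τ)) x := fun x hx i j =>
    (hτ1 x hx i j).differentiableAt (by norm_num)
  have hnd : ∀ x, DifferentiableAt ℝ n x := fun x =>
    (hn.differentiable (by norm_num)) x
  have hnd1 : ∀ x, ∀ i : Fin 3, DifferentiableAt ℝ (pd i n) x := by
    intro x i
    exact ((pd_contDiffAt (m := 1) (by exact_mod_cast hn.contDiffAt) i)).differentiableAt (by norm_num)
  have hlapC : ∀ x ∈ U, ContDiffAt ℝ 1 (lap τ) x := by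
    intro x hx
    have : ContDiffAt ℝ 1 (fun y => ∑ i : Fin 3, pd i (pd i τ) y) x := by
      apply ContDiffAt.sum
      intro i _
      exact hτ1 x hx i i
    exact this
  -- Step A: first differentiated eikonal identity
  have hA : ∀ x ∈ U, ∀ j : Fin 3,
      ∑ i : Fin 3, pd i τ x * pd j (pd i τ) x = n x * pd j n x := by
    intro x hx j
    have heq : (fun y => ∑ i : Fin 3, (pd i τ y) ^ 2) =ᶠ[nhds x] (fun y => n y ^ 2) := by
      filter_upwards [hU.mem_nhds hx] with y hy using heik y hy
    have h1 := pd_congr_nhds heq j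
    rw [pd_sum (f := fun i y => (pd i τ y) ^ 2) (fun i => (dτ1 x hx i).pow 2) j,
      pd_sq (hnd x) j] at h1
    have h2 : ∑ i : Fin 3, pd j (fun y => (pd i τ y) ^ 2) x
        = 2 * ∑ i : Fin 3, pd i τ x * pd j (pd i τ) x := by
      rw [Finset.mul_sum]
      refine Finset.sum_congr rfl fun i _ => ?_
      rw [pd_sq (dτ1 x hx i) j]
      ring
    rw [h2] at h1
    linarith
  -- Step C: second differentiated identity (summed, with Hessian symmetry)
  have hC : ∀ x ∈ U,
      ∑ i : Fin 3, pd i τ x * pd i (lap τ) x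
        = ∑ j : Fin 3, (pd j n x) ^ 2 + n x * ∑ j : Fin 3, pd j (pd j n) x
          - ∑ j : Fin 3, ∑ i : Fin 3, (pd j (pd i τ) x) ^ 2 := by
    intro x hx
    -- second differentiation of the identity from step A
    have hFG : ∀ j : Fin 3,
        ∑ i : Fin 3, ((pd j (pd i τ) x) ^ 2 + pd i τ x * pd j (pd j (pd i τ)) x)
          = (pd j n x) ^ 2 + n x * pd j (pd j n) x := by
      intro j
      have heq : (fun y => ∑ i : Fin 3, pd i τ y * pd j (pd i τ) y)
          =ᶠ[nhds x] (fun y => n y * pd j n y) := by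
        filter_upwards [hU.mem_nhds hx] with y hy using hA y hy j
      have h1 := pd_congr_nhds heq j
      rw [pd_sum (f := fun i y => pd i τ y * pd j (pd i τ) y)
          (fun i => (dτ1 x hx i).mul (dτ2 x hx j i)) j,
        pd_mul (hnd x) (hnd1 x j) j] at h1
      have h2 : ∑ i : Fin 3, pd j (fun y => pd i τ y * pd j (pd i τ) y) x
          = ∑ i : Fin 3, ((pd j (pd i τ) x) ^ 2 + pd i τ x * pd j (pd j (pd i τ)) x) := by
        refine Finset.sum_congr rfl fun i _ => ?_
        rw [pd_mul (dτ1 x hx i) (dτ2 x hx j i) j]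
        ring
      rw [h2] at h1
      rw [h1]
      ring
    -- third-order derivative exchange
    have hswap : ∀ i j : Fin 3, pd j (pd j (pd i τ)) x = pd i (pd j (pd j τ)) x := by
      intro i j
      have e1 : pd j (pd i τ) =ᶠ[nhds x] pd i (pd j τ) := by
        filter_upwards [hU.mem_nhds hx] with y hy using
          pd_comm ((hτx y hy).of_le (by norm_num)) j i
      calc pd j (pd j (pd i τ)) x = pd j (pd i (pd j τ)) x := pd_congr_nhds e1 j
        _ = pd i (pd j (pd j τ)) x := pd_comm (hτ2 x hx j) j i
    have hlapexp : ∀ i : Fin 3, pd i (lap τ) x = ∑ j : Fin 3, pd i (pd j (pd j τ)) x := by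
      intro i
      have : pd i (lap τ) x = pd i (fun y => ∑ j : Fin 3, pd j (pd j τ) y) x := rfl
      rw [this, pd_sum (f := fun j => pd j (pd j τ)) (fun j => dτ2 x hx j j) i]
    have main : ∑ i : Fin 3, pd i τ x * pd i (lap τ) x
        = ∑ j : Fin 3, ∑ i : Fin 3, pd i τ x * pd j (pd j (pd i τ)) x := by
      rw [Finset.sum_comm]
      refine Finset.sum_congr rfl fun i _ => ?_
      rw [hlapexp i, Finset.mul_sum]
      refine Finset.sum_congr rfl fun j _ => ?_
      rw [hswap i j]
    rw [main]
    have expand : ∀ j : Fin 3, ∑ i : Fin 3, pd i τ x * pd j (pd j (pd i τ)) x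
        = (pd j n x) ^ 2 + n x * pd j (pd j n) x - ∑ i : Fin 3, (pd j (pd i τ) x) ^ 2 := by
      intro j
      have := hFG j
      rw [Finset.sum_add_distrib] at this
      linarith
    rw [Finset.sum_congr rfl fun j _ => expand j]
    rw [Finset.sum_sub_distrib, Finset.sum_add_distrib, ← Finset.mul_sum]
  -- bound on the transport term
  have hn₀₀pos : (0:ℝ) < n₀₀ := by linarith
  have hbound : ∀ x ∈ U, ∑ i : Fin 3, pd i τ x * pd i (lap τ) x ≤ 6 * n₀₀ ^ 2 := by
    intro x hx
    rw [hC x hx]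
    have t1 : ∑ j : Fin 3, (pd j n x) ^ 2 ≤ 3 * n₀₀ ^ 2 := by
      have : ∀ j : Fin 3, (pd j n x) ^ 2 ≤ n₀₀ ^ 2 := by
        intro j
        calc (pd j n x) ^ 2 = |pd j n x| ^ 2 := (sq_abs _).symm
          _ ≤ n₀₀ ^ 2 := pow_le_pow_left₀ (abs_nonneg _) (hb1 x j) 2
      calc ∑ j : Fin 3, (pd j n x) ^ 2 ≤ ∑ _j : Fin 3, n₀₀ ^ 2 :=
            Finset.sum_le_sum fun j _ => this j
        _ = 3 * n₀₀ ^ 2 := by simp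
    have t2 : n x * ∑ j : Fin 3, pd j (pd j n) x ≤ 3 * n₀₀ ^ 2 := by
      have hS : |∑ j : Fin 3, pd j (pd j n) x| ≤ 3 * n₀₀ := by
        calc |∑ j : Fin 3, pd j (pd j n) x| ≤ ∑ j : Fin 3, |pd j (pd j n) x| :=
              Finset.abs_sum_le_sum_abs _ _
          _ ≤ ∑ _j : Fin 3, n₀₀ := Finset.sum_le_sum fun j _ => hb2 x j j
          _ = 3 * n₀₀ := by simp
      calc n x * ∑ j : Fin 3, pd j (pd j n) x
          ≤ |n x * ∑ j : Fin 3, pd j (pd j n) x| := le_abs_self _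
        _ = |n x| * |∑ j : Fin 3, pd j (pd j n) x| := abs_mul _ _
        _ ≤ n₀₀ * (3 * n₀₀) :=
            mul_le_mul (hb0 x) hS (abs_nonneg _) (le_of_lt hn₀₀pos)
        _ = 3 * n₀₀ ^ 2 := by ring
    have t3 : (0:ℝ) ≤ ∑ j : Fin 3, ∑ i : Fin 3, (pd j (pd i τ) x) ^ 2 :=
      Finset.sum_nonneg fun j _ => Finset.sum_nonneg fun i _ => sq_nonneg _
    linarith
  -- Step D/E: lap τ (γ s) ≤ 6 n₀₀² s on [0, s₀]
  have hkey : ∀ s ∈ Icc (0:ℝ) s₀, lap τ (γ s) ≤ 6 * n₀₀ ^ 2 * s := by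
    set D : ℝ → ℝ :=
      fun s => fderiv ℝ (lap τ) (γ s) (fun i => pd i τ (γ s) / n (γ s) ^ 2) with hD
    have hder : ∀ s ∈ Icc (0:ℝ) s₀,
        HasDerivWithinAt (fun t => lap τ (γ t)) (D s) (Icc 0 s₀) s := by
      intro s hs
      have hx := hγU s hs
      have hf : HasFDerivAt (lap τ) (fderiv ℝ (lap τ) (γ s)) (γ s) :=
        ((hlapC _ hx).differentiableAt (by norm_num)).hasFDerivAt
      exact hf.comp_hasDerivWithinAt s (hgeo s hs)
    have hDle : ∀ s ∈ Icc (0:ℝ) s₀, D s ≤ 6 * n₀₀ ^ 2 := by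
      intro s hs
      have hx := hγU s hs
      have hval : D s = (∑ i : Fin 3, pd i τ (γ s) * pd i (lap τ) (γ s)) / n (γ s) ^ 2 := by
        show (fderiv ℝ (lap τ) (γ s)) (fun i => pd i τ (γ s) / n (γ s) ^ 2)
            = (∑ i : Fin 3, pd i τ (γ s) * pd i (lap τ) (γ s)) / n (γ s) ^ 2
        rw [clm_apply_eq_sum, Finset.sum_div]
        refine Finset.sum_congr rfl fun i _ => ?_
        show pd i τ (γ s) / n (γ s) ^ 2 * pd i (lap τ) (γ s) = _
        ring
      have h6 := hbound (γ s) hx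
      have hn2 : (1:ℝ) ≤ n (γ s) ^ 2 := by nlinarith [hn1 (γ s)]
      rw [hval, div_le_iff₀ (by linarith)]
      nlinarith [sq_nonneg n₀₀]
    have hφder : ∀ s ∈ interior (Icc (0:ℝ) s₀),
        HasDerivWithinAt (fun t => 6 * n₀₀ ^ 2 * t - lap τ (γ t))
          (6 * n₀₀ ^ 2 - D s) (interior (Icc (0:ℝ) s₀)) s := by
      intro s hs
      have hs' : s ∈ Icc (0:ℝ) s₀ := interior_subset hs
      have h1 : HasDerivAt (fun t : ℝ => 6 * n₀₀ ^ 2 * t) (6 * n₀₀ ^ 2) s := by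
        simpa using (hasDerivAt_id s).const_mul (6 * n₀₀ ^ 2)
      exact (h1.hasDerivWithinAt.mono interior_subset).sub
        ((hder s hs').mono interior_subset)
    have hcont : ContinuousOn (fun t => 6 * n₀₀ ^ 2 * t - lap τ (γ t)) (Icc (0:ℝ) s₀) := by
      apply ContinuousOn.sub
      · exact (continuous_const.mul continuous_id).continuousOn
      · exact fun s hs => (hder s hs).continuousWithinAt
    have hmono : MonotoneOn (fun t => 6 * n₀₀ ^ 2 * t - lap τ (γ t)) (Icc (0:ℝ) s₀) :=
      monotoneOn_of_hasDerivWithinAt_nonneg (convex_Icc 0 s₀) hcont hφder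
        (fun s hs => by have := hDle s (interior_subset hs); linarith)
    intro s hs
    have h0 : (0:ℝ) ∈ Icc (0:ℝ) s₀ := left_mem_Icc.mpr hs₀
    have := hmono h0 hs hs.1
    simp only [mul_zero, hinit, sub_zero] at this
    linarith
  -- Step F: bound the integral
  have hint : (∫ s in (0:ℝ)..s₀, lap τ (γ s) / n (γ s) ^ 2) ≤ 3 * n₀₀ ^ 2 * n₀ ^ 2 := by
    have hγcont : ContinuousOn γ (Icc 0 s₀) := fun s hs => (hgeo s hs).continuousWithinAt
    have hcont1 : ContinuousOn (fun s => lap τ (γ s) / n (γ s) ^ 2) (Icc (0:ℝ) s₀) := by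
      apply ContinuousOn.div
      · exact fun s hs =>
          ((hlapC (γ s) (hγU s hs)).continuousAt.comp_continuousWithinAt (hγcont s hs))
      · exact ((hn.continuous.comp_continuousOn hγcont).pow 2)
      · intro s hs
        have := hn1 (γ s)
        positivity
    have I1 : IntervalIntegrable (fun s => lap τ (γ s) / n (γ s) ^ 2) MeasureTheory.volume 0 s₀ := by
      apply ContinuousOn.intervalIntegrable
      rwa [uIcc_of_le hs₀]
    have I2 : IntervalIntegrable (fun s => 6 * n₀₀ ^ 2 * s) MeasureTheory.volume 0 s₀ :=
      (continuous_const.mul continuous_id).intervalIntegrable 0 s₀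
    have hm : (∫ s in (0:ℝ)..s₀, lap τ (γ s) / n (γ s) ^ 2)
        ≤ ∫ s in (0:ℝ)..s₀, 6 * n₀₀ ^ 2 * s := by
      apply intervalIntegral.integral_mono_on hs₀ I1 I2
      intro s hs
      have hk := hkey s hs
      have hn2 : (1:ℝ) ≤ n (γ s) ^ 2 := by nlinarith [hn1 (γ s)]
      have hrs : (0:ℝ) ≤ 6 * n₀₀ ^ 2 * s := mul_nonneg (by positivity) hs.1
      rw [div_le_iff₀ (by linarith)]
      nlinarith [mul_nonneg hrs (by linarith : (0:ℝ) ≤ n (γ s) ^ 2 - 1)]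
    have hval : (∫ s in (0:ℝ)..s₀, 6 * n₀₀ ^ 2 * s) = 3 * n₀₀ ^ 2 * s₀ ^ 2 := by
      rw [intervalIntegral.integral_const_mul, integral_id]
      ring
    have hs2 : s₀ ^ 2 ≤ n₀ ^ 2 := pow_le_pow_left₀ hs₀ hs₀n₀ 2
    rw [hval] at hm
    nlinarith [sq_nonneg n₀₀]
  have hexp : Real.exp (-(3 * n₀₀ ^ 2 * n₀ ^ 2) / 2)
      ≤ Real.exp (-(1 / 2) * ∫ s in (0:ℝ)..s₀, lap τ (γ s) / n (γ s) ^ 2) :=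
    Real.exp_le_exp.mpr (by linarith)
  rw [ge_iff_le]
  linarith
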